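/- For probability mass functions P and Q on a finite alphabet Z with P ≪ Q, and W_α = α·P + (1-α)·Q, the KL divergence D(W_α ‖ Q) is at least (α²/2)·χ₂(P‖Q)·(1 - √α) for all sufficiently small α > 0. -/

import Mathlib

set_option maxHeartbeats 1000000

open Filter Real

lemma hasDerivAux (c y : ℝ) (hy : (0:ℝ) < 1 + y) :
    HasDerivAt (fun t => (1+t) * Real.log (1+t) - (t + (1-c)*t^2/2))
      (Real.log (1+y) - (1-c)*y) y := by
  have h1 : HasDerivAt (fun t : ℝ => 1 + t) 1 y := (hasDerivAt_id y).const_add 1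
  have hlog : HasDerivAt (fun t : ℝ => Real.log (1+t)) ((1+y)⁻¹ * 1) y :=
    (Real.hasDerivAt_log hy.ne').comp y h1
  have hmul : HasDerivAt (fun t : ℝ => (1+t) * Real.log (1+t))
      (1 * Real.log (1+y) + (1+y) * ((1+y)⁻¹ * 1)) y := h1.mul hlog
  have hpoly : HasDerivAt (fun t : ℝ => t + (1-c)*t^2/2)
      (1 + (1-c)*(2*y^1)/2) y := by
    have h2 : HasDerivAt (fun t : ℝ => t^2) (2*y^1) y := hasDerivAt_pow 2 y
    exact (hasDerivAt_id y).add ((h2.const_mul (1-c)).div_const 2)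
  have := hmul.sub hpoly
  refine this.congr_deriv ?_
  rw [one_mul, mul_one, mul_inv_cancel₀ hy.ne']
  ring

lemma negcase (x : ℝ) (h1 : -(1/2 : ℝ) ≤ x) (h2 : x ≤ 0) :
    x + x^2/2 ≤ (1+x) * Real.log (1+x) := by
  set φ : ℝ → ℝ := fun t => (1+t) * Real.log (1+t) - (t + (1-(0:ℝ))*t^2/2) with hφ
  have hpos : ∀ y ∈ Set.Icc (-(1/2:ℝ)) 0, (0:ℝ) < 1 + y := by
    intro y hy; have := hy.1; simp at this ⊢; linarith
  have hanti : AntitoneOn φ (Set.Icc (-(1/2:ℝ)) 0) := by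
    apply antitoneOn_of_deriv_nonpos (convex_Icc _ _)
    · intro y hy
      exact (hasDerivAux 0 y (hpos y hy)).continuousAt.continuousWithinAt
    · intro y hy
      rw [interior_Icc] at hy
      exact (hasDerivAux 0 y (hpos y (Set.mem_Icc_of_Ioo hy))).differentiableAt.differentiableWithinAt
    · intro y hy
      rw [interior_Icc] at hy
      rw [(hasDerivAux 0 y (hpos y (Set.mem_Icc_of_Ioo hy))).deriv]
      have hlog := Real.log_le_sub_one_of_pos (hpos y (Set.mem_Icc_of_Ioo hy))
      linarith
  have key := hanti (Set.mem_Icc.mpr ⟨h1, h2⟩) (Set.right_mem_Icc.mpr (by norm_num)) h2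
  simp only [hφ] at key
  simp at key
  nlinarith [key]

lemma poscase (c x : ℝ) (hc0 : 0 < c) (hc1 : c ≤ 1) (h1 : 0 ≤ x) (h2 : x ≤ c) :
    x + (1-c)*x^2/2 ≤ (1+x) * Real.log (1+x) := by
  set φ : ℝ → ℝ := fun t => (1+t) * Real.log (1+t) - (t + (1-c)*t^2/2) with hφ
  have hpos : ∀ y ∈ Set.Icc (0:ℝ) c, (0:ℝ) < 1 + y := by
    intro y hy; have := hy.1; linarith
  have hmono : MonotoneOn φ (Set.Icc (0:ℝ) c) := by
    apply monotoneOn_of_deriv_nonneg (convex_Icc _ _)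
    · intro y hy
      exact (hasDerivAux c y (hpos y hy)).continuousAt.continuousWithinAt
    · intro y hy
      rw [interior_Icc] at hy
      exact (hasDerivAux c y (hpos y (Set.mem_Icc_of_Ioo hy))).differentiableAt.differentiableWithinAt
    · intro y hy
      rw [interior_Icc] at hy
      have hy0 : 0 < y := hy.1
      have hyc : y < c := hy.2
      have hpy : (0:ℝ) < 1 + y := by linarith
      rw [(hasDerivAux c y hpy).deriv]
      have hlog := Real.one_sub_inv_le_log_of_pos hpy
      have hinv : (1-c)*y ≤ 1 - (1+y)⁻¹ := by
        rw [inv_eq_one_div, sub_div' hpy.ne', le_div_iff₀ hpy]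
        nlinarith [mul_le_mul_of_nonneg_left hyc.le hy0.le,
          mul_nonneg (mul_nonneg hc0.le hy0.le) hy0.le]
      linarith
  have key := hmono (Set.left_mem_Icc.mpr hc0.le) (Set.mem_Icc.mpr ⟨h1, h2⟩) h1
  simp only [hφ] at key
  simp at key
  nlinarith [key]

/- pinned declarations -/
noncomputable def KL {Z : Type*} [Fintype Z] (P Q : Z → ℝ) : ℝ :=
  ∑ z, P z * Real.log (P z / Q z)

noncomputable def chi2 {Z : Type*} [Fintype Z] (P Q : Z → ℝ) : ℝ :=
  ∑ z, (P z - Q z)^2 / Q z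

def IsPMF {Z : Type*} [Fintype Z] (P : Z → ℝ) : Prop :=
  (∀ z, 0 ≤ P z) ∧ ∑ z, P z = 1

/-- absolute continuity `P ≪ Q` for pmfs on a finite alphabet -/
def AC {Z : Type*} [Fintype Z] (P Q : Z → ℝ) : Prop := ∀ z, Q z = 0 → P z = 0

/-- for sufficiently small `α > 0`,
`D(αP+(1-α)Q ‖ Q) ≥ (α²/2)·χ₂(P‖Q)·(1-√α)`. -/
theorem stmt1 {Z : Type*} [Fintype Z] (P Q : Z → ℝ)
    (hP : IsPMF P) (hQ : IsPMF Q) (hAC : AC P Q) :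
    ∃ α₀ > (0:ℝ), ∀ α : ℝ, 0 < α → α ≤ α₀ →
      α ^ 2 / 2 * chi2 P Q * (1 - Real.sqrt α) ≤
        KL (fun z => α * P z + (1 - α) * Q z) Q := by
  obtain ⟨hPn, hPs⟩ := hP
  obtain ⟨hQn, hQs⟩ := hQ
  obtain ⟨S, hS⟩ : ∃ s : ℝ, s = ∑ z, P z / Q z := ⟨_, rfl⟩
  have hS0 : 0 ≤ S := by
    rw [hS]; exact Finset.sum_nonneg fun z _ => div_nonneg (hPn z) (hQn z)
  obtain ⟨M, hM⟩ : ∃ m : ℝ, m = S + 1 := ⟨_, rfl⟩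
  have hM1 : (1:ℝ) ≤ M := by rw [hM]; linarith
  have hM0 : (0:ℝ) < M := by linarith
  refine ⟨1/(2*M^2), by positivity, ?_⟩
  intro α hα hαle
  have hαM : α * (2*M^2) ≤ 1 := (le_div_iff₀ (by positivity)).mp hαle
  have hMsq : (1:ℝ) ≤ M^2 := by nlinarith
  have hα1 : α ≤ 1/2 := by nlinarith [mul_le_mul_of_nonneg_left hMsq hα.le]
  obtain ⟨c, hcdef⟩ : ∃ c : ℝ, c = Real.sqrt α := ⟨_, rfl⟩
  rw [← hcdef]
  have hc0 : 0 < c := hcdef ▸ Real.sqrt_pos.mpr hα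
  have hc1 : c ≤ 1 := by
    rw [hcdef, show (1:ℝ) = Real.sqrt 1 by simp]
    exact Real.sqrt_le_sqrt (by linarith)
  have hcc : c^2 = α := by rw [hcdef]; exact Real.sq_sqrt hα.le
  have hαc : α * M ≤ c := by
    rw [hcdef]
    rw [Real.le_sqrt (by positivity) hα.le]
    nlinarith
  have key : ∀ z, α^2/2 * ((P z - Q z)^2 / Q z) * (1 - c)
      ≤ (α * P z + (1-α) * Q z) * Real.log ((α * P z + (1-α) * Q z) / Q z)
        - α * (P z - Q z) := by
    intro z
    rcases eq_or_lt_of_le (hQn z) with hq | hq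
    · have hp : P z = 0 := hAC z hq.symm
      simp [← hq, hp]
    · obtain ⟨x, hx⟩ : ∃ x : ℝ, x = α * (P z - Q z) / Q z := ⟨_, rfl⟩
      have hdiv : (α * P z + (1-α) * Q z) / Q z = 1 + x := by
        rw [hx]; field_simp; ring
      have hW : α * P z + (1-α) * Q z = Q z * (1 + x) := by
        rw [hx]; field_simp; ring
      have hxq : α * (P z - Q z) = Q z * x := by
        rw [hx]; field_simp
      have hchi : α^2/2 * ((P z - Q z)^2 / Q z) = Q z * (x^2/2) := by
        rw [hx]; field_simp
      have hxlo : -(1/2 : ℝ) ≤ x := by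
        rw [hx, le_div_iff₀ hq]
        nlinarith [hPn z, hα.le]
      have hpq : P z / Q z ≤ S := by
        rw [hS]
        exact Finset.single_le_sum (f := fun z => P z / Q z)
          (fun i _ => div_nonneg (hPn i) (hQn i)) (Finset.mem_univ z)
      have hp' : P z / Q z * Q z = P z := div_mul_cancel₀ _ hq.ne'
      have hxhi : x ≤ c := by
        have hPz : P z ≤ S * Q z := by
          nlinarith [mul_le_mul_of_nonneg_right hpq hq.le]
        have h2 : P z - Q z ≤ M * Q z := by rw [hM]; nlinarith
        have h1 : x ≤ α * M := by
          rw [hx, div_le_iff₀ hq]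
          nlinarith [mul_le_mul_of_nonneg_left h2 hα.le]
        linarith
      have hkey : x + (1-c)*x^2/2 ≤ (1+x) * Real.log (1+x) := by
        rcases le_or_gt x 0 with h | h
        · have h1 := negcase x hxlo h
          have h2 : 0 ≤ c * x^2 := mul_nonneg hc0.le (sq_nonneg x)
          linarith
        · exact poscase c x hc0 hc1 h.le hxhi
      rw [hdiv, hW, hxq, hchi]
      calc Q z * (x^2/2) * (1-c) = Q z * ((1-c)*x^2/2) := by ring
        _ ≤ Q z * ((1+x) * Real.log (1+x) - x) := by
            apply mul_le_mul_of_nonneg_left _ hq.le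
            linarith
        _ = Q z * (1+x) * Real.log (1+x) - Q z * x := by ring
  have hsum := Finset.sum_le_sum (s := Finset.univ) (fun z _ => key z)
  have hL : ∑ z, α^2/2 * ((P z - Q z)^2 / Q z) * (1 - c)
      = α^2/2 * chi2 P Q * (1 - c) := by
    rw [chi2, Finset.mul_sum, Finset.sum_mul]
  have hR : ∑ z, ((α * P z + (1-α) * Q z) * Real.log ((α * P z + (1-α) * Q z) / Q z)
        - α * (P z - Q z))
      = KL (fun z => α * P z + (1 - α) * Q z) Q := by
    rw [Finset.sum_sub_distrib, KL]
    have h0 : ∑ z, α * (P z - Q z) = 0 := by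
      rw [← Finset.mul_sum, Finset.sum_sub_distrib, hPs, hQs]; ring
    rw [h0, sub_zero]
  rw [hL, hR] at hsum
  exact hsum
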